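/- Let λ > 1, α > 0 with 2α > (3λ-1)/(λ-1), and suppose 0 < β(λ-1) < 1. Then the equation w(y) = y, with w(y) = β(λe^{-y(1+αy)} - 1)(1 - e^{-y(1+αy)}), has at most two solutions in (0, y_c), where y_c(1+αy_c) = ln λ. -/

import Mathlib

open Real Set

noncomputable def Vf (α t : ℝ) : ℝ := 1 - 4*α*Real.log t
noncomputable def Phi (lam α β t : ℝ) : ℝ :=
  β*(lam*t-1)*(1-t) - (Real.sqrt (Vf α t) - 1)/(2*α)
noncomputable def Phi1 (lam α β t : ℝ) : ℝ :=
  β*(lam + 1 - 2*lam*t) + 1/(t*Real.sqrt (Vf α t))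
noncomputable def Phi2 (lam α β t : ℝ) : ℝ :=
  -(2*β*lam) + (2*α - Vf α t)/(t^2 * Vf α t * Real.sqrt (Vf α t))
noncomputable def Phi3 (α t : ℝ) : ℝ :=
  2*((Vf α t)^2 - 3*α*(Vf α t) + 6*α^2)/(t^3 * (Vf α t)^2 * Real.sqrt (Vf α t))

lemma hVd {α t : ℝ} (ht : 0 < t) : HasDerivAt (Vf α) (-(4*α)/t) t := by
  have h := ((Real.hasDerivAt_log ht.ne').const_mul (4*α)).const_sub 1
  refine h.congr_deriv ?_
  field_simp

lemma hsqrtVd {α t : ℝ} (ht : 0 < t) (hv : 0 < Vf α t) :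
    HasDerivAt (fun s => Real.sqrt (Vf α s)) (-(2*α)/(t*Real.sqrt (Vf α t))) t := by
  have h := (Real.hasDerivAt_sqrt hv.ne').comp t (hVd ht)
  refine h.congr_deriv ?_
  have hs : Real.sqrt (Vf α t) ≠ 0 := (Real.sqrt_pos.2 hv).ne'
  field_simp
  ring

lemma hPhid {lam α β t : ℝ} (ht : 0 < t) (hv : 0 < Vf α t) (hα : 0 < α) :
    HasDerivAt (Phi lam α β) (Phi1 lam α β t) t := by
  have hpoly : HasDerivAt (fun s => β*(lam*s-1)*(1-s)) (β*(lam + 1 - 2*lam*t)) t := by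
    have h := (((hasDerivAt_id t).const_mul lam).sub_const 1 |>.const_mul β).mul
        ((hasDerivAt_id t).const_sub 1)
    exact h.congr_deriv (by simp only [id]; ring)
  have hY : HasDerivAt (fun s => (Real.sqrt (Vf α s) - 1)/(2*α)) (-(1/(t*Real.sqrt (Vf α t)))) t := by
    have h := ((hsqrtVd ht hv).sub_const 1).div_const (2*α)
    refine h.congr_deriv ?_
    have hs : Real.sqrt (Vf α t) ≠ 0 := (Real.sqrt_pos.2 hv).ne'
    field_simp
  have := hpoly.sub hY
  refine this.congr_deriv ?_
  unfold Phi1; ring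

lemma hPhi1d {lam α β t : ℝ} (ht : 0 < t) (hv : 0 < Vf α t) :
    HasDerivAt (Phi1 lam α β) (Phi2 lam α β t) t := by
  have hs : 0 < Real.sqrt (Vf α t) := Real.sqrt_pos.2 hv
  have hne : t * Real.sqrt (Vf α t) ≠ 0 := by positivity
  have hg : HasDerivAt (fun s => s * Real.sqrt (Vf α s))
      (1 * Real.sqrt (Vf α t) + t * (-(2*α)/(t*Real.sqrt (Vf α t)))) t :=
    (hasDerivAt_id t).mul (hsqrtVd ht hv)
  have hinv := hg.inv hne
  have hpoly : HasDerivAt (fun s : ℝ => β*(lam + 1 - 2*lam*s)) (β*(0 - 2*lam*1)) t :=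
    ((((hasDerivAt_id t).const_mul (2*lam)).const_sub (lam+1)).const_mul β).congr_deriv (by ring)
  have h := hpoly.add (hinv.congr_deriv rfl)
  have : Phi1 lam α β = fun s => β*(lam + 1 - 2*lam*s) + (s * Real.sqrt (Vf α s))⁻¹ := by
    funext s; unfold Phi1; rw [one_div]
  rw [this]
  refine h.congr_deriv ?_
  obtain ⟨r, hr⟩ : ∃ r, r = Real.sqrt (Vf α t) := ⟨_, rfl⟩
  have hrpos : 0 < r := hr ▸ hs
  have hr2 : Vf α t = r * r := by rw [hr, Real.mul_self_sqrt hv.le]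
  unfold Phi2
  rw [← hr, hr2]
  field_simp
  ring

lemma hPhi2d {lam α β t : ℝ} (ht : 0 < t) (hv : 0 < Vf α t) :
    HasDerivAt (Phi2 lam α β) (Phi3 α t) t := by
  have hs : 0 < Real.sqrt (Vf α t) := Real.sqrt_pos.2 hv
  have hgne : t^2 * Vf α t * Real.sqrt (Vf α t) ≠ 0 := by positivity
  have hg : HasDerivAt (fun s => s^2 * Vf α s * Real.sqrt (Vf α s))
      ((((2:ℕ):ℝ) * t^(2-1) * Vf α t + t^2 * (-(4*α)/t)) * Real.sqrt (Vf α t)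
        + t^2 * Vf α t * (-(2*α)/(t*Real.sqrt (Vf α t)))) t :=
    ((hasDerivAt_pow 2 t).mul (hVd ht)).mul (hsqrtVd ht hv)
  have hN : HasDerivAt (fun s => 2*α - Vf α s) (-(-(4*α)/t)) t := (hVd ht).const_sub (2*α)
  have h := ((hN.div hg hgne).const_add (-(2*β*lam)))
  have : Phi2 lam α β = fun s =>
      -(2*β*lam) + (2*α - Vf α s)/(s^2 * Vf α s * Real.sqrt (Vf α s)) := by
    funext s; rfl
  rw [this]
  refine h.congr_deriv ?_
  obtain ⟨r, hr⟩ : ∃ r, r = Real.sqrt (Vf α t) := ⟨_, rfl⟩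
  have hrpos : 0 < r := hr ▸ hs
  have hr2 : Vf α t = r * r := by rw [hr, Real.mul_self_sqrt hv.le]
  unfold Phi3
  rw [← hr, hr2]
  field_simp
  ring

lemma hVpos {α t : ℝ} (hα : 0 < α) (ht : 0 < t) (ht1 : t ≤ 1) : 0 < Vf α t := by
  have : Real.log t ≤ 0 := Real.log_nonpos ht.le ht1
  unfold Vf; nlinarith

lemma hPhi3pos {α t : ℝ} (hα : 0 < α) (ht : 0 < t) (hv : 0 < Vf α t) : 0 < Phi3 α t := by
  have hs : 0 < Real.sqrt (Vf α t) := Real.sqrt_pos.2 hv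
  unfold Phi3
  have hnum : 0 < (Vf α t)^2 - 3*α*(Vf α t) + 6*α^2 := by nlinarith [sq_nonneg (Vf α t - 3*α/2)]
  positivity

lemma hPhi2mono {lam α β : ℝ} (hα : 0 < α) : StrictMonoOn (Phi2 lam α β) (Set.Ioc 0 1) := by
  apply strictMonoOn_of_deriv_pos (convex_Ioc 0 1)
  · intro x hx
    exact (hPhi2d hx.1 (hVpos hα hx.1 hx.2)).continuousAt.continuousWithinAt
  · intro x hx
    rw [interior_Ioc] at hx
    rw [(hPhi2d hx.1 (hVpos hα hx.1 hx.2.le)).deriv]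
    exact hPhi3pos hα hx.1 (hVpos hα hx.1 hx.2.le)

lemma Phi_one {lam α β : ℝ} : Phi lam α β 1 = 0 := by
  unfold Phi Vf; simp

lemma Phi_fixed {lam α β y : ℝ} (hα : 0 < α) (hy : 0 ≤ y)
    (hw : β * (lam * Real.exp (-(y * (1 + α * y))) - 1) * (1 - Real.exp (-(y * (1 + α * y)))) = y) :
    Phi lam α β (Real.exp (-(y * (1 + α * y)))) = 0 := by
  have hV : Vf α (Real.exp (-(y * (1 + α * y)))) = (1 + 2*α*y)^2 := by
    unfold Vf; rw [Real.log_exp]; ring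
  have hsq : Real.sqrt (Vf α (Real.exp (-(y * (1 + α * y))))) = 1 + 2*α*y := by
    rw [hV, Real.sqrt_sq (by positivity)]
  unfold Phi
  rw [hsq]
  have : (1 + 2*α*y - 1)/(2*α) = y := by field_simp; ring
  rw [this, hw, sub_self]

lemma rolle0 {f f' : ℝ → ℝ} {a b : ℝ} (hab : a < b) (ha : 0 < a) (hb : b ≤ 1)
    (hd : ∀ x ∈ Set.Ioc (0:ℝ) 1, HasDerivAt f (f' x) x)
    (hfa : f a = 0) (hfb : f b = 0) : ∃ c ∈ Set.Ioo a b, f' c = 0 := by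
  apply exists_hasDerivAt_eq_zero hab
  · intro x hx
    exact (hd x ⟨lt_of_lt_of_le ha hx.1, le_trans hx.2 hb⟩).continuousAt.continuousWithinAt
  · rw [hfa, hfb]
  · intro x hx
    exact hd x ⟨lt_trans ha hx.1, le_of_lt (lt_of_lt_of_le hx.2 hb)⟩

lemma key (lam α β : ℝ) (hα : 0 < α) (y1 y2 y3 : ℝ) (h1 : 0 < y1) (h12 : y1 < y2) (h23 : y2 < y3)
    (hw1 : β * (lam * Real.exp (-(y1 * (1 + α * y1))) - 1) * (1 - Real.exp (-(y1 * (1 + α * y1)))) = y1)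
    (hw2 : β * (lam * Real.exp (-(y2 * (1 + α * y2))) - 1) * (1 - Real.exp (-(y2 * (1 + α * y2)))) = y2)
    (hw3 : β * (lam * Real.exp (-(y3 * (1 + α * y3))) - 1) * (1 - Real.exp (-(y3 * (1 + α * y3)))) = y3) :
    False := by
  have hmono : ∀ p q : ℝ, 0 < p → p < q →
      Real.exp (-(q * (1 + α * q))) < Real.exp (-(p * (1 + α * p))) := by
    intro p q hp hpq
    apply Real.exp_lt_exp.2
    have hq : 0 < q := hp.trans hpq
    have hd : q*(1+α*q) - p*(1+α*p) = (q-p)*(1 + α*(q+p)) := by ring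
    have h2 : 0 < (q-p)*(1+α*(q+p)) :=
      mul_pos (by linarith) (by nlinarith [mul_pos hα (show (0:ℝ) < q+p by linarith)])
    linarith
  have hdPhi : ∀ x ∈ Set.Ioc (0:ℝ) 1, HasDerivAt (Phi lam α β) (Phi1 lam α β x) x :=
    fun x hx => hPhid hx.1 (hVpos hα hx.1 hx.2) hα
  have hdPhi1 : ∀ x ∈ Set.Ioc (0:ℝ) 1, HasDerivAt (Phi1 lam α β) (Phi2 lam α β x) x :=
    fun x hx => hPhi1d hx.1 (hVpos hα hx.1 hx.2)
  obtain ⟨t3, t2, t1, p3, e32, e21, e1, z3, z2, z1⟩ :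
      ∃ t3 t2 t1 : ℝ, 0 < t3 ∧ t3 < t2 ∧ t2 < t1 ∧ t1 < 1 ∧
        Phi lam α β t3 = 0 ∧ Phi lam α β t2 = 0 ∧ Phi lam α β t1 = 0 := by
    refine ⟨Real.exp (-(y3 * (1 + α * y3))), Real.exp (-(y2 * (1 + α * y2))),
      Real.exp (-(y1 * (1 + α * y1))), Real.exp_pos _,
      hmono _ _ (h1.trans h12) h23, hmono _ _ h1 h12, ?_,
      Phi_fixed hα (by linarith) hw3, Phi_fixed hα (by linarith) hw2,
      Phi_fixed hα h1.le hw1⟩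
    have : -(y1 * (1 + α * y1)) < 0 := by nlinarith [mul_pos hα (mul_pos h1 h1)]
    calc Real.exp (-(y1 * (1 + α * y1))) < Real.exp 0 := Real.exp_lt_exp.2 this
    _ = 1 := Real.exp_zero
  obtain ⟨ζ1, hζ1, hz1⟩ := rolle0 e32 p3 (by linarith) hdPhi z3 z2
  obtain ⟨ζ2, hζ2, hz2⟩ := rolle0 e21 (by linarith) (by linarith) hdPhi z2 z1
  obtain ⟨ζ3, hζ3, hz3⟩ := rolle0 e1 (by linarith) le_rfl hdPhi z1 Phi_one
  obtain ⟨η1, hη1, hq1⟩ := rolle0 (show ζ1 < ζ2 from hζ1.2.trans hζ2.1)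
    (p3.trans hζ1.1) (by nlinarith [hζ2.2, e1]) hdPhi1 hz1 hz2
  obtain ⟨η2, hη2, hq2⟩ := rolle0 (show ζ2 < ζ3 from hζ2.2.trans hζ3.1)
    (by nlinarith [hζ2.1, hζ1.1, p3]) hζ3.2.le hdPhi1 hz2 hz3
  have hm := hPhi2mono (lam := lam) (β := β) hα
    (show η1 ∈ Set.Ioc (0:ℝ) 1 by
      constructor
      · nlinarith [hη1.1, hζ1.1, p3]
      · nlinarith [hη1.2, hζ2.2, e1])
    (show η2 ∈ Set.Ioc (0:ℝ) 1 by
      constructor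
      · nlinarith [hη2.1, hζ2.1, hζ1.1, p3]
      · nlinarith [hη2.2, hζ3.2])
    (show η1 < η2 from hη1.2.trans hη2.1)
  rw [hq1, hq2] at hm
  exact lt_irrefl 0 hm

theorem w_fixed_point_at_most_two (lam α β yc : ℝ) (hlam : 1 < lam) (hα : 0 < α)
    (hα2 : 2 * α > (3 * lam - 1) / (lam - 1)) (hβ : 0 < β)
    (hR0 : 0 < β * (lam - 1)) (hR : β * (lam - 1) < 1)
    (hyc : 0 < yc) (hyceq : yc * (1 + α * yc) = Real.log lam) :
    let w : ℝ → ℝ := fun y =>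
      β * (lam * Real.exp (-(y * (1 + α * y))) - 1) * (1 - Real.exp (-(y * (1 + α * y))))
    ∀ a b c : ℝ, a ∈ Set.Ioo 0 yc → w a = a → b ∈ Set.Ioo 0 yc → w b = b →
      c ∈ Set.Ioo 0 yc → w c = c → a = b ∨ a = c ∨ b = c := by
  intro w a b c ha hwa hb hwb hc hwc
  by_contra h
  push_neg at h
  obtain ⟨hab, hac, hbc⟩ := h
  have K : ∀ y1 y2 y3 : ℝ, 0 < y1 → y1 < y2 → y2 < y3 →
      w y1 = y1 → w y2 = y2 → w y3 = y3 → False :=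
    fun y1 y2 y3 p q r s t u => key lam α β hα y1 y2 y3 p q r s t u
  rcases lt_trichotomy a b with h1 | h1 | h1
  · rcases lt_trichotomy b c with h2 | h2 | h2
    · exact K a b c ha.1 h1 h2 hwa hwb hwc
    · exact hbc h2
    · rcases lt_trichotomy a c with h3 | h3 | h3
      · exact K a c b ha.1 h3 h2 hwa hwc hwb
      · exact hac h3
      · exact K c a b hc.1 h3 h1 hwc hwa hwb
  · exact hab h1
  · rcases lt_trichotomy a c with h2 | h2 | h2
    · exact K b a c hb.1 h1 h2 hwb hwa hwc
    · exact hac h2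
    · rcases lt_trichotomy b c with h3 | h3 | h3
      · exact K b c a hb.1 h3 h2 hwb hwc hwa
      · exact hbc h3
      · exact K c b a hc.1 h3 h1 hwc hwb hwa
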